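/- Let H be a non-complete k-uniform hypergraph on n vertices and e a k-subset of vertices not an edge of H. Then |QE(H+e) − QE(H)| ≤ 2k − 2k/n. -/

import Mathlib

open Matrix BigOperators Finset

/-- Incidence matrix of a hypergraph on vertex set `Fin n` with edges `E : Fin m → Finset (Fin n)`. -/
noncomputable def inc {n m : ℕ} (E : Fin m → Finset (Fin n)) : Matrix (Fin n) (Fin m) ℝ :=
  fun v e => if v ∈ E e then 1 else 0

/-- Adjacency matrix of the line multigraph: `(e,f)`-entry is `|E e ∩ E f|` for `e ≠ f`, `0` on diagonal. -/
noncomputable def lineAdj {n m : ℕ} (E : Fin m → Finset (Fin n)) : Matrix (Fin m) (Fin m) ℝ :=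
  fun e f => if e = f then 0 else ((E e ∩ E f).card : ℝ)

/-- Adjacency matrix of the clique multigraph: `(u,v)`-entry is the number of edges containing both. -/
noncomputable def cliqueAdj {n m : ℕ} (E : Fin m → Finset (Fin n)) : Matrix (Fin n) (Fin n) ℝ :=
  fun u v => if u = v then 0 else ((univ.filter fun e => u ∈ E e ∧ v ∈ E e).card : ℝ)

/-- Degree of a vertex: number of edges containing it. -/
def deg {n m : ℕ} (E : Fin m → Finset (Fin n)) (v : Fin n) : ℕ :=
  (univ.filter fun e => v ∈ E e).card

namespace Stmt17Aux

variable {n : ℕ}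


variable {n : ℕ}

lemma mulVec_dot_self (U : Matrix (Fin n) (Fin n) ℝ) (hU : Uᵀ * U = 1) (q : Fin n → ℝ) :
    (U *ᵥ q) ⬝ᵥ (U *ᵥ q) = q ⬝ᵥ q := by
  calc (U *ᵥ q) ⬝ᵥ (U *ᵥ q) = (q ᵥ* Uᵀ) ⬝ᵥ (U *ᵥ q) := by rw [Matrix.vecMul_transpose]
    _ = q ⬝ᵥ (Uᵀ *ᵥ (U *ᵥ q)) := (Matrix.dotProduct_mulVec _ _ _).symm
    _ = q ⬝ᵥ ((Uᵀ * U) *ᵥ q) := by rw [Matrix.mulVec_mulVec]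
    _ = q ⬝ᵥ q := by rw [hU, Matrix.one_mulVec]

lemma abs_dot_mulVec_le (U : Matrix (Fin n) (Fin n) ℝ) (hU : Uᵀ * U = 1) (q : Fin n → ℝ) :
    |q ⬝ᵥ (U *ᵥ q)| ≤ q ⬝ᵥ q := by
  have hq : (0:ℝ) ≤ q ⬝ᵥ q := Finset.sum_nonneg fun i _ => mul_self_nonneg _
  have hc := Finset.sum_mul_sq_le_sq_mul_sq Finset.univ q (U *ᵥ q)
  have h2 : (∑ i, (U *ᵥ q) i ^ 2) = q ⬝ᵥ q := by
    have h := mulVec_dot_self U hU q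
    simpa [dotProduct, pow_two] using h
  have hq2 : (∑ i, q i ^ 2) = q ⬝ᵥ q := by simp [dotProduct, pow_two]
  have hc' : (q ⬝ᵥ (U *ᵥ q)) ^ 2 ≤ (q ⬝ᵥ q) * (q ⬝ᵥ q) := by
    rw [hq2, h2] at hc; exact hc
  nlinarith [abs_nonneg (q ⬝ᵥ (U *ᵥ q)), sq_abs (q ⬝ᵥ (U *ᵥ q))]



variable {n : ℕ}

lemma abs_trace_mul_proj_le (U P : Matrix (Fin n) (Fin n) ℝ)
    (hU : Uᵀ * U = 1) (hPs : Pᵀ = P) (hP2 : P * P = P)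
    (habs : ∀ q : Fin n → ℝ, |q ⬝ᵥ (U *ᵥ q)| ≤ q ⬝ᵥ q) :
    |(U * P).trace| ≤ P.trace := by
  have hsym : ∀ i j, P j i = P i j := fun i j => congrFun (congrFun hPs i) j
  have key : (U * P).trace = ∑ i, (fun j => P j i) ⬝ᵥ (U *ᵥ fun j => P j i) := by
    conv_lhs => rw [← hP2, ← Matrix.mul_assoc, Matrix.trace_mul_comm]
    rw [Matrix.trace]
    refine Finset.sum_congr rfl fun i _ => ?_
    simp only [Matrix.diag_apply, Matrix.mul_apply, Matrix.mulVec, dotProduct,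
      Finset.sum_mul, Finset.mul_sum]
    refine Finset.sum_congr rfl fun j _ => ?_
    rw [hsym j i]
  have tr : P.trace = ∑ i, (fun j => P j i) ⬝ᵥ (fun j => P j i) := by
    conv_lhs => rw [← hP2]
    rw [Matrix.trace]
    refine Finset.sum_congr rfl fun i _ => ?_
    simp only [Matrix.diag_apply, Matrix.mul_apply, dotProduct]
    exact Finset.sum_congr rfl fun j _ => by rw [hsym j i]
  rw [key, tr]
  calc |∑ i, (fun j => P j i) ⬝ᵥ (U *ᵥ fun j => P j i)|
      ≤ ∑ i, |(fun j => P j i) ⬝ᵥ (U *ᵥ fun j => P j i)| := Finset.abs_sum_le_sum_abs _ _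
    _ ≤ ∑ i, (fun j => P j i) ⬝ᵥ (fun j => P j i) := Finset.sum_le_sum fun i _ => habs _



variable {n : ℕ}

lemma abs_diag_le_one (W : Matrix (Fin n) (Fin n) ℝ) (hW : Wᵀ * W = 1) (i : Fin n) :
    |W i i| ≤ 1 := by
  have h : ∑ j, W j i * W j i = 1 := by
    have h0 := congrFun (congrFun hW i) i
    simpa [Matrix.mul_apply, Matrix.one_apply] using h0
  have h1 : W i i * W i i ≤ 1 := by
    rw [← h]
    exact Finset.single_le_sum (fun j _ => mul_self_nonneg (W j i)) (Finset.mem_univ i)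
  nlinarith [abs_nonneg (W i i), sq_abs (W i i)]

lemma trace_mul_le (U V : Matrix (Fin n) (Fin n) ℝ) (hU : Uᵀ * U = 1) (hV : Vᵀ * V = 1)
    (μ : Fin n → ℝ) :
    (U * (V * diagonal μ * Vᵀ)).trace ≤ ∑ i, |μ i| := by
  have hV' : V * Vᵀ = 1 := mul_eq_one_comm.mp hV
  have hWo : (Vᵀ * U * V)ᵀ * (Vᵀ * U * V) = 1 := by
    have ht : (Vᵀ * U * V)ᵀ = Vᵀ * Uᵀ * V := by
      simp [Matrix.transpose_mul, Matrix.mul_assoc]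
    rw [ht]
    calc Vᵀ * Uᵀ * V * (Vᵀ * U * V)
        = Vᵀ * (Uᵀ * ((V * Vᵀ) * (U * V))) := by simp only [Matrix.mul_assoc]
      _ = Vᵀ * (Uᵀ * (U * V)) := by rw [hV', Matrix.one_mul]
      _ = Vᵀ * ((Uᵀ * U) * V) := by rw [Matrix.mul_assoc]
      _ = 1 := by rw [hU, Matrix.one_mul, hV]
  have htr : (U * (V * diagonal μ * Vᵀ)).trace = ((Vᵀ * U * V) * diagonal μ).trace := by
    rw [show U * (V * diagonal μ * Vᵀ) = (U * (V * diagonal μ)) * Vᵀ by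
        simp only [Matrix.mul_assoc]]
    rw [Matrix.trace_mul_comm]
    simp only [Matrix.mul_assoc]
  rw [htr]
  have hdiag : ((Vᵀ * U * V) * diagonal μ).trace = ∑ i, (Vᵀ * U * V) i i * μ i := by
    rw [Matrix.trace]
    exact Finset.sum_congr rfl fun i _ => by rw [Matrix.diag_apply, Matrix.mul_diagonal]
  rw [hdiag]
  refine Finset.sum_le_sum fun i _ => ?_
  calc (Vᵀ * U * V) i i * μ i ≤ |(Vᵀ * U * V) i i * μ i| := le_abs_self _
    _ = |(Vᵀ * U * V) i i| * |μ i| := abs_mul _ _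
    _ ≤ 1 * |μ i| := by
        have := abs_diag_le_one (Vᵀ * U * V) hWo i
        exact mul_le_mul_of_nonneg_right this (abs_nonneg _)
    _ = |μ i| := one_mul _

lemma exists_orth_trace_eq (V : Matrix (Fin n) (Fin n) ℝ) (hV : Vᵀ * V = 1) (μ : Fin n → ℝ) :
    ∃ U : Matrix (Fin n) (Fin n) ℝ, Uᵀ * U = 1 ∧
      (U * (V * diagonal μ * Vᵀ)).trace = ∑ i, |μ i| := by
  have hV' : V * Vᵀ = 1 := mul_eq_one_comm.mp hV
  set s : Fin n → ℝ := fun i => if μ i < 0 then -1 else 1 with hs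
  have hss : ∀ i, s i * s i = 1 := by
    intro i; simp only [hs]; split <;> norm_num
  have hsμ : ∀ i, s i * μ i = |μ i| := by
    intro i; simp only [hs]; split
    · rw [abs_of_neg (by assumption)]; ring
    · rw [abs_of_nonneg (le_of_not_gt (by assumption))]; ring
  refine ⟨V * diagonal s * Vᵀ, ?_, ?_⟩
  · have ht : (V * diagonal s * Vᵀ)ᵀ = V * diagonal s * Vᵀ := by
      simp [Matrix.transpose_mul, Matrix.diagonal_transpose, Matrix.mul_assoc]
    rw [ht]
    calc V * diagonal s * Vᵀ * (V * diagonal s * Vᵀ)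
        = V * (diagonal s * ((Vᵀ * V) * (diagonal s * Vᵀ))) := by simp only [Matrix.mul_assoc]
      _ = V * (diagonal s * (diagonal s * Vᵀ)) := by rw [hV, Matrix.one_mul]
      _ = V * ((diagonal s * diagonal s) * Vᵀ) := by rw [Matrix.mul_assoc]
      _ = V * Vᵀ := by
          rw [Matrix.diagonal_mul_diagonal]
          congr 1
          rw [show (fun i => s i * s i) = fun _ => (1:ℝ) from funext hss, Matrix.diagonal_one,
            Matrix.one_mul]
      _ = 1 := hV'
  · have hm : V * diagonal s * Vᵀ * (V * diagonal μ * Vᵀ) = V * diagonal (fun i => s i * μ i) * Vᵀ := by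
      calc V * diagonal s * Vᵀ * (V * diagonal μ * Vᵀ)
          = V * (diagonal s * ((Vᵀ * V) * (diagonal μ * Vᵀ))) := by simp only [Matrix.mul_assoc]
        _ = V * (diagonal s * (diagonal μ * Vᵀ)) := by rw [hV, Matrix.one_mul]
        _ = V * ((diagonal s * diagonal μ) * Vᵀ) := by rw [Matrix.mul_assoc]
        _ = V * diagonal (fun i => s i * μ i) * Vᵀ := by
            rw [Matrix.diagonal_mul_diagonal, Matrix.mul_assoc]
    rw [hm]
    have : (V * diagonal (fun i => s i * μ i) * Vᵀ).trace = (diagonal (fun i => s i * μ i)).trace := by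
      rw [Matrix.trace_mul_comm, ← Matrix.mul_assoc, hV, Matrix.one_mul]
    rw [this, Matrix.trace_diagonal]
    exact Finset.sum_congr rfl fun i _ => hsμ i



variable {n : ℕ}


lemma abs_trace_mul_proj_le'' (U P : Matrix (Fin n) (Fin n) ℝ)
    (hU : Uᵀ * U = 1) (hPs : Pᵀ = P) (hP2 : P * P = P) :
    |(U * P).trace| ≤ P.trace :=
  abs_trace_mul_proj_le U P hU hPs hP2 (abs_dot_mulVec_le U hU)

lemma trace_mul_D_le (U : Matrix (Fin n) (Fin n) ℝ) (hU : Uᵀ * U = 1)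
    (χ : Fin n → ℝ) (k : ℝ) (hkpos : 0 < k) (hχ : ∑ j, χ j * χ j = k)
    (hn : 0 < n) :
    |(U * ((Matrix.of fun u v => χ u * χ v) - (k / n) • 1)).trace| ≤ 2 * k - 2 * k / n := by
  have hnR : (1:ℝ) ≤ n := by exact_mod_cast hn
  have hnR0 : (0:ℝ) < n := by positivity
  set K : Matrix (Fin n) (Fin n) ℝ := Matrix.of fun u v => χ u * χ v with hK
  set P : Matrix (Fin n) (Fin n) ℝ := k⁻¹ • K with hP
  have hPs : Pᵀ = P := by
    ext u v; simp [hP, hK, mul_comm]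
  have hKK : K * K = k • K := by
    ext u v
    simp only [hK, Matrix.mul_apply, Matrix.of_apply, Matrix.smul_apply, smul_eq_mul]
    calc ∑ j, χ u * χ j * (χ j * χ v) = (χ u * χ v) * ∑ j, χ j * χ j := by
          rw [Finset.mul_sum]; exact Finset.sum_congr rfl fun j _ => by ring
      _ = k * (χ u * χ v) := by rw [hχ]; ring
  have hP2 : P * P = P := by
    rw [hP, Matrix.smul_mul, Matrix.mul_smul, hKK, smul_smul, smul_smul]
    congr 1
    field_simp
  have hKP : K = k • P := by
    rw [hP, smul_smul, mul_inv_cancel₀ (ne_of_gt hkpos), one_smul]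
  have htrP : P.trace = 1 := by
    simp only [hP, hK, Matrix.trace, Matrix.diag_apply, Matrix.smul_apply, Matrix.of_apply,
      smul_eq_mul, ← Finset.mul_sum]
    rw [hχ, inv_mul_cancel₀ (ne_of_gt hkpos)]
  have hQs : (1 - P)ᵀ = 1 - P := by
    rw [Matrix.transpose_sub, Matrix.transpose_one, hPs]
  have hQ2 : (1 - P) * (1 - P) = 1 - P := by
    rw [Matrix.mul_sub, Matrix.mul_one, Matrix.sub_mul, Matrix.one_mul, hP2]
    abel
  have htrQ : (1 - P).trace = (n:ℝ) - 1 := by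
    rw [Matrix.trace_sub, Matrix.trace_one, htrP]
    simp
  have h1 := abs_trace_mul_proj_le'' U P hU hPs hP2
  have h2 := abs_trace_mul_proj_le'' U (1 - P) hU hQs hQ2
  rw [htrP] at h1
  rw [htrQ] at h2
  set a := (U * P).trace with ha
  set b := (U * (1 - P)).trace with hb
  obtain ⟨c, hc⟩ : ∃ c : ℝ, c = k / n := ⟨_, rfl⟩
  have hcn : c * n = k := by rw [hc]; field_simp
  have hc0 : 0 < c := by rw [hc]; positivity
  have hck : c ≤ k := by nlinarith
  have htU : U.trace = a + b := by
    have hU1 : U * (1:Matrix (Fin n) (Fin n) ℝ) = U * P + U * (1 - P) := by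
      rw [← Matrix.mul_add]; congr 1; abel
    rw [← Matrix.mul_one U, hU1, Matrix.trace_add]
  have hdecomp : (U * (K - (k / ↑n) • 1)).trace = k * a - c * (a + b) := by
    have e1 : U * (K - (k / ↑n) • 1) = k • (U * P) - (k / ↑n) • (U * 1) := by
      rw [Matrix.mul_sub, hKP, Matrix.mul_smul, Matrix.mul_smul, Matrix.mul_smul]
    rw [e1, Matrix.trace_sub, Matrix.trace_smul, Matrix.trace_smul, Matrix.mul_one, htU, ← hc]
    simp only [smul_eq_mul]
    rfl
  rw [hdecomp]
  have hgoal2 : 2 * k / (n:ℝ) = 2 * c := by rw [hc]; ring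
  rw [hgoal2, abs_le] at *
  obtain ⟨ha2, ha3⟩ := h1
  obtain ⟨hb2, hb3⟩ := h2
  constructor
  · nlinarith [mul_nonneg (sub_nonneg.2 hck) (by linarith : (0:ℝ) ≤ 1 + a),
      mul_nonneg hc0.le (by linarith : (0:ℝ) ≤ (n:ℝ) - 1 - b)]
  · nlinarith [mul_nonneg (sub_nonneg.2 hck) (by linarith : (0:ℝ) ≤ 1 - a),
      mul_nonneg hc0.le (by linarith : (0:ℝ) ≤ (n:ℝ) - 1 + b)]




lemma spectral_real {n : ℕ} (A : Matrix (Fin n) (Fin n) ℝ) (hA : A.IsHermitian) :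
    ∃ V : Matrix (Fin n) (Fin n) ℝ, Vᵀ * V = 1 ∧
      A = V * diagonal hA.eigenvalues * Vᵀ := by
  refine ⟨(hA.eigenvectorUnitary : Matrix (Fin n) (Fin n) ℝ), ?_, ?_⟩
  · have h := Matrix.mem_unitaryGroup_iff'.mp hA.eigenvectorUnitary.2
    rwa [Matrix.star_eq_conjTranspose, Matrix.conjTranspose_eq_transpose_of_trivial] at h
  · have h := hA.spectral_theorem
    rwa [Unitary.conjStarAlgAut_apply, Matrix.star_eq_conjTranspose, Matrix.conjTranspose_eq_transpose_of_trivial,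
      show (RCLike.ofReal ∘ hA.eigenvalues : Fin n → ℝ) = hA.eigenvalues from rfl] at h



lemma shift {n : ℕ} (V : Matrix (Fin n) (Fin n) ℝ) (hV : Vᵀ * V = 1) (μ : Fin n → ℝ) (c : ℝ) :
    V * diagonal μ * Vᵀ - c • 1 = V * diagonal (fun i => μ i - c) * Vᵀ := by
  have hV' : V * Vᵀ = 1 := mul_eq_one_comm.mp hV
  have h1 : (c • (1:Matrix (Fin n) (Fin n) ℝ)) = V * diagonal (fun _ => c) * Vᵀ := by
    rw [← Matrix.smul_one_eq_diagonal, Matrix.mul_smul, Matrix.mul_one, Matrix.smul_mul, hV']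
  rw [h1, ← Matrix.sub_mul, ← Matrix.mul_sub, Matrix.diagonal_sub]


end Stmt17Aux

/-- adding a non-edge `e` changes the signless Laplacian energy by at
most `2k - 2k/n`. -/
theorem stmt17 {n m k : ℕ} (E : Fin m → Finset (Fin n))
    (hk2 : 2 ≤ k) (hk : ∀ e, (E e).card = k) (hn : 0 < n)
    (e : Finset (Fin n)) (he : e.card = k) (hne : ∀ i, E i ≠ e)
    (hQ : (inc E * (inc E)ᵀ).IsHermitian)
    (hQ' : (inc (Fin.cons e E) * (inc (Fin.cons e E))ᵀ).IsHermitian) :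
    abs ((∑ i, |hQ'.eigenvalues i - (k * (m + 1) : ℝ) / n|) -
        ∑ i, |hQ.eigenvalues i - (k * m : ℝ) / n|) ≤
      2 * k - 2 * k / n := by
  classical
  have hn0 : ((n:ℝ)) ≠ 0 := Nat.cast_ne_zero.mpr hn.ne'
  have hkpos : (0:ℝ) < k := by
    have : 0 < k := lt_of_lt_of_le two_pos hk2
    exact_mod_cast this
  set χ : Fin n → ℝ := fun v => if v ∈ e then 1 else 0 with hχdef
  have hχ : ∑ j, χ j * χ j = (k:ℝ) := by
    have h : ∀ j, χ j * χ j = if j ∈ e then (1:ℝ) else 0 := by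
      intro j; simp only [hχdef]; split <;> norm_num
    rw [Finset.sum_congr rfl fun j _ => h j, Finset.sum_ite_mem, Finset.univ_inter,
      Finset.sum_const, he]
    simp
  set c : ℝ := (k * m : ℝ) / n with hcdef
  set c' : ℝ := (k * (m + 1) : ℝ) / n with hc'def
  have hc' : c' = c + (k:ℝ) / n := by
    rw [hcdef, hc'def]; field_simp
  have hdiff : inc (Fin.cons e E) * (inc (Fin.cons e E))ᵀ
      = inc E * (inc E)ᵀ + Matrix.of fun u v => χ u * χ v := by
    ext u v
    simp only [Matrix.mul_apply, Matrix.transpose_apply, Matrix.add_apply, Matrix.of_apply, inc]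
    rw [Fin.sum_univ_succ]
    simp only [Fin.cons_zero, Fin.cons_succ, hχdef]
    ring
  obtain ⟨V, hV, hsp⟩ := Stmt17Aux.spectral_real _ hQ
  obtain ⟨V', hV', hsp'⟩ := Stmt17Aux.spectral_real _ hQ'
  set μ : Fin n → ℝ := fun i => hQ.eigenvalues i - c with hμdef
  set μ' : Fin n → ℝ := fun i => hQ'.eigenvalues i - c' with hμ'def
  have hA : inc E * (inc E)ᵀ - c • 1 = V * Matrix.diagonal μ * Vᵀ := by
    rw [hsp]; exact Stmt17Aux.shift V hV _ c
  have hA' : inc (Fin.cons e E) * (inc (Fin.cons e E))ᵀ - c' • 1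
      = V' * Matrix.diagonal μ' * V'ᵀ := by
    rw [hsp']; exact Stmt17Aux.shift V' hV' _ c'
  set D : Matrix (Fin n) (Fin n) ℝ :=
    (Matrix.of fun u v => χ u * χ v) - ((k:ℝ) / n) • 1 with hDdef
  have hAD : inc (Fin.cons e E) * (inc (Fin.cons e E))ᵀ - c' • 1
      = (inc E * (inc E)ᵀ - c • 1) + D := by
    rw [hdiff, hc', add_smul, hDdef]
    abel
  have hDbound : ∀ U : Matrix (Fin n) (Fin n) ℝ, Uᵀ * U = 1 →
      |(U * D).trace| ≤ 2 * (k:ℝ) - 2 * k / n := by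
    intro U hU
    exact Stmt17Aux.trace_mul_D_le U hU χ k hkpos hχ hn
  -- upper bound: S' ≤ S + bound
  obtain ⟨U', hU'o, hU'tr⟩ := Stmt17Aux.exists_orth_trace_eq V' hV' μ'
  obtain ⟨U, hUo, hUtr⟩ := Stmt17Aux.exists_orth_trace_eq V hV μ
  have h1 : (∑ i, |μ' i|) ≤ (∑ i, |μ i|) + (2 * (k:ℝ) - 2 * k / n) := by
    have e1 : (∑ i, |μ' i|) = (U' * (inc (Fin.cons e E) * (inc (Fin.cons e E))ᵀ - c' • 1)).trace := by
      rw [hA', hU'tr]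
    have e2 : (U' * (inc (Fin.cons e E) * (inc (Fin.cons e E))ᵀ - c' • 1)).trace
        = (U' * (inc E * (inc E)ᵀ - c • 1)).trace + (U' * D).trace := by
      rw [hAD, Matrix.mul_add, Matrix.trace_add]
    have e3 : (U' * (inc E * (inc E)ᵀ - c • 1)).trace ≤ ∑ i, |μ i| := by
      rw [hA]; exact Stmt17Aux.trace_mul_le U' V hU'o hV μ
    have e4 : (U' * D).trace ≤ 2 * (k:ℝ) - 2 * k / n :=
      le_trans (le_abs_self _) (hDbound U' hU'o)
    rw [e1, e2]; linarith
  have h2 : (∑ i, |μ i|) ≤ (∑ i, |μ' i|) + (2 * (k:ℝ) - 2 * k / n) := by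
    have e1 : (∑ i, |μ i|) = (U * (inc E * (inc E)ᵀ - c • 1)).trace := by
      rw [hA, hUtr]
    have e2 : (U * (inc E * (inc E)ᵀ - c • 1)).trace
        = (U * (inc (Fin.cons e E) * (inc (Fin.cons e E))ᵀ - c' • 1)).trace - (U * D).trace := by
      rw [hAD, Matrix.mul_add, Matrix.trace_add]; ring
    have e3 : (U * (inc (Fin.cons e E) * (inc (Fin.cons e E))ᵀ - c' • 1)).trace ≤ ∑ i, |μ' i| := by
      rw [hA']; exact Stmt17Aux.trace_mul_le U V' hUo hV' μ'
    have e4 : -((U * D).trace) ≤ 2 * (k:ℝ) - 2 * k / n :=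
      le_trans (neg_le_abs _) (hDbound U hUo)
    rw [e1, e2]; linarith
  rw [abs_sub_le_iff]
  constructor <;> [skip; skip] <;> simp only [hμdef, hμ'def] at h1 h2 <;> linarith
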